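/- arXiv:2603.00011 — 5 statements merged into one kernel-verified Lean document; each statement's English description precedes it below -/
import Mathlib

section
/- Let G be a finite subgroup of the real orthogonal group O(n,ℝ), acting ℂ-linearly on ℂⁿ through its real matrix entries. Let W = {x ∈ ℂⁿ : there exists σ ∈ G with x̄ = σx} (the union of the twisted real subspaces over all of G). Then for every radius r > 0, the n-dimensional Hausdorff measure of W intersected with the open ball B(0,r) equals #Inv(G) times the n-dimensional Hausdorff measure of {x ∈ ℂⁿ : x̄ = x} ∩ B(0,r), where Inv(G) = {σ ∈ G : σ² = id} is the set of involutions of G together with the identity. -/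
open MeasureTheory Matrix
open scoped ENNReal NNReal ComplexConjugate

noncomputable instance (n : ℕ) : MeasurableSpace (EuclideanSpace ℂ (Fin n)) := borel _
instance (n : ℕ) : BorelSpace (EuclideanSpace ℂ (Fin n)) := ⟨rfl⟩

/-- The ℂ-linear action of a real `n × n` matrix on `ℂⁿ` (with its Euclidean metric). -/
noncomputable def mact {n : ℕ} (σ : Matrix (Fin n) (Fin n) ℝ) (x : EuclideanSpace ℂ (Fin n)) :
    EuclideanSpace ℂ (Fin n) :=
  WithLp.toLp 2 (fun i => ∑ j, (σ i j : ℂ) * x j)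

/-- Entrywise complex conjugation on `ℂⁿ`. -/
noncomputable def cconj {n : ℕ} (x : EuclideanSpace ℂ (Fin n)) : EuclideanSpace ℂ (Fin n) :=
  WithLp.toLp 2 (fun i => (starRingEnd ℂ) (x i))

noncomputable def cmat {n : ℕ} (σ : Matrix (Fin n) (Fin n) ℝ) : Matrix (Fin n) (Fin n) ℂ :=
  σ.map Complex.ofRealHom

variable {n : ℕ}

lemma mact_eq (σ : Matrix (Fin n) (Fin n) ℝ) (x : EuclideanSpace ℂ (Fin n)) :
    mact σ x = (cmat σ) *ᵥ (x : Fin n → ℂ) := by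
  ext i; simp [mact, cmat, Matrix.mulVec, dotProduct]

lemma cconj_eq (x : EuclideanSpace ℂ (Fin n)) : cconj x = star (show Fin n → ℂ from x) := rfl

lemma cmat_mul (σ τ : Matrix (Fin n) (Fin n) ℝ) : cmat (σ * τ) = cmat σ * cmat τ :=
  Matrix.map_mul

lemma cmat_one : cmat (1 : Matrix (Fin n) (Fin n) ℝ) = 1 :=
  Matrix.map_one _ (map_zero _) (map_one _)

lemma cmat_add (σ τ : Matrix (Fin n) (Fin n) ℝ) : cmat (σ + τ) = cmat σ + cmat τ :=
  Matrix.map_add _ (map_add _) _ _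

lemma cmat_transpose (σ : Matrix (Fin n) (Fin n) ℝ) : cmat σᵀ = (cmat σ)ᵀ :=
  by ext i j; simp [cmat]

lemma cmat_inj {σ τ : Matrix (Fin n) (Fin n) ℝ} (h : cmat σ = cmat τ) : σ = τ := by
  ext i j
  have := congrFun (congrFun h i) j
  simpa [cmat] using this

lemma star_cmat_mulVec (σ : Matrix (Fin n) (Fin n) ℝ) (v : Fin n → ℂ) :
    star (cmat σ *ᵥ v) = cmat σ *ᵥ star v := by
  ext i
  simp [cmat, Matrix.mulVec, dotProduct, star_sum, Complex.conj_ofReal]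


-- vector form
noncomputable def vf (x : EuclideanSpace ℂ (Fin n)) : Fin n → ℂ := x
noncomputable def ve (x : Fin n → ℂ) : EuclideanSpace ℂ (Fin n) := WithLp.toLp 2 x

lemma vf_inj {x y : EuclideanSpace ℂ (Fin n)} (h : vf x = vf y) : x = y :=
  WithLp.ofLp_injective (p := 2) h

lemma dot_mulVec_mulVec (M N : Matrix (Fin n) (Fin n) ℂ) (v w : Fin n → ℂ) :
    (M *ᵥ v) ⬝ᵥ (N *ᵥ w) = v ⬝ᵥ ((Mᵀ * N) *ᵥ w) := by
  rw [Matrix.dotProduct_mulVec, ← Matrix.transpose_transpose M, Matrix.mulVec_transpose,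
    Matrix.vecMul_vecMul, ← Matrix.dotProduct_mulVec, Matrix.transpose_transpose]

lemma mulVec_dot (M : Matrix (Fin n) (Fin n) ℂ) (v w : Fin n → ℂ) :
    (M *ᵥ v) ⬝ᵥ w = v ⬝ᵥ (Mᵀ *ᵥ w) := by
  have := dot_mulVec_mulVec M 1 v w
  simpa using this

lemma norm_eq_of_dot (x y : EuclideanSpace ℂ (Fin n))
    (h : star (vf x) ⬝ᵥ (vf x) = star (vf y) ⬝ᵥ (vf y)) : ‖x‖ = ‖y‖ := by
  have key : ∀ z : EuclideanSpace ℂ (Fin n),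
      star (vf z) ⬝ᵥ (vf z) = ((∑ i, ‖z i‖ ^ 2 : ℝ) : ℂ) := by
    intro z
    simp only [dotProduct, Pi.star_apply, vf, Complex.ofReal_sum]
    refine Finset.sum_congr rfl fun i _ => ?_
    rw [show star (z i) = (starRingEnd ℂ) (z i) from rfl, ← Complex.normSq_eq_conj_mul_self,
      Complex.normSq_eq_norm_sq]
  rw [key, key] at h
  have h2 : (∑ i, ‖x i‖ ^ 2 : ℝ) = ∑ i, ‖y i‖ ^ 2 := by exact_mod_cast h
  rw [EuclideanSpace.norm_eq, EuclideanSpace.norm_eq, h2]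

section invo
variable (σ : Matrix (Fin n) (Fin n) ℝ)

noncomputable def Pmat : Matrix (Fin n) (Fin n) ℝ := (2⁻¹ : ℝ) • (1 + σ)
noncomputable def Qmat : Matrix (Fin n) (Fin n) ℝ := (2⁻¹ : ℝ) • (1 - σ)

lemma Pmat_add_Qmat : Pmat σ + Qmat σ = 1 := by
  rw [Pmat, Qmat, ← smul_add]
  have : (1 + σ) + (1 - σ) = (2 : ℝ) • (1 : Matrix (Fin n) (Fin n) ℝ) := by
    rw [two_smul]; abel
  rw [this, smul_smul]; norm_num

variable (hinv2 : σ * σ = 1)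
include hinv2

lemma Pmat_mul_Pmat : Pmat σ * Pmat σ = Pmat σ := by
  rw [Pmat, smul_mul_assoc, mul_smul_comm, smul_smul]
  have : (1 + σ) * (1 + σ) = (2 : ℝ) • (1 + σ) := by
    rw [mul_add, add_mul, add_mul, one_mul, mul_one, hinv2, two_smul]; simp only [one_mul, mul_one]; abel
  rw [this, smul_smul]; norm_num

lemma Qmat_mul_Qmat : Qmat σ * Qmat σ = Qmat σ := by
  rw [Qmat, smul_mul_assoc, mul_smul_comm, smul_smul]
  have : (1 - σ) * (1 - σ) = (2 : ℝ) • (1 - σ) := by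
    rw [mul_sub, sub_mul, sub_mul, one_mul, mul_one, hinv2, two_smul]; simp only [one_mul, mul_one]; abel
  rw [this, smul_smul]; norm_num

lemma Pmat_mul_Qmat : Pmat σ * Qmat σ = 0 := by
  rw [Pmat, Qmat, smul_mul_assoc, mul_smul_comm, smul_smul]
  have : (1 + σ) * (1 - σ) = 0 := by
    rw [mul_sub, add_mul, add_mul, one_mul, mul_one, hinv2]; simp only [one_mul, mul_one]; abel
  rw [this, smul_zero]

lemma Qmat_mul_Pmat : Qmat σ * Pmat σ = 0 := by
  rw [Pmat, Qmat, smul_mul_assoc, mul_smul_comm, smul_smul]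
  have : (1 - σ) * (1 + σ) = 0 := by
    rw [mul_add, sub_mul, sub_mul, one_mul, mul_one, hinv2]; simp only [one_mul, mul_one]; abel
  rw [this, smul_zero]

lemma sigma_mul_Pmat : σ * Pmat σ = Pmat σ := by
  rw [Pmat, mul_smul_comm]
  congr 1
  rw [mul_add, mul_one, hinv2, add_comm]

lemma sigma_mul_Qmat : σ * Qmat σ = -(Qmat σ) := by
  rw [Qmat, mul_smul_comm, ← smul_neg]
  congr 1
  rw [mul_sub, mul_one, hinv2, neg_sub]

variable (horth : σᵀ * σ = 1)
include horth

lemma sigma_symm : σᵀ = σ := by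
  have h1 : σᵀ * (σ * σ) = σᵀ := by rw [hinv2, mul_one]
  have h2 : σᵀ * (σ * σ) = σ := by rw [← mul_assoc, horth, one_mul]
  rw [← h1, h2]

lemma Pmat_symm : (Pmat σ)ᵀ = Pmat σ := by
  rw [Pmat, Matrix.transpose_smul, Matrix.transpose_add, Matrix.transpose_one,
    sigma_symm σ hinv2 horth]

lemma Qmat_symm : (Qmat σ)ᵀ = Qmat σ := by
  rw [Qmat, Matrix.transpose_smul, Matrix.transpose_sub, Matrix.transpose_one,
    sigma_symm σ hinv2 horth]

end invo

section fmapsec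
variable (σ : Matrix (Fin n) (Fin n) ℝ)

noncomputable def fmap (x : EuclideanSpace ℂ (Fin n)) : EuclideanSpace ℂ (Fin n) :=
  ve (cmat (Pmat σ) *ᵥ vf x + Complex.I • (cmat (Qmat σ) *ᵥ star (vf x)))

lemma fmap_vf (x : EuclideanSpace ℂ (Fin n)) :
    vf (fmap σ x) = cmat (Pmat σ) *ᵥ vf x + Complex.I • (cmat (Qmat σ) *ᵥ star (vf x)) := rfl

lemma vf_sub (x y : EuclideanSpace ℂ (Fin n)) : vf (x - y) = vf x - vf y := rfl

lemma fmap_sub (x y : EuclideanSpace ℂ (Fin n)) : fmap σ (x - y) = fmap σ x - fmap σ y := by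
  have : vf (fmap σ (x - y)) = vf (fmap σ x) - vf (fmap σ y) := by
    rw [fmap_vf, fmap_vf, fmap_vf, vf_sub, star_sub, Matrix.mulVec_sub, Matrix.mulVec_sub,
      smul_sub]
    abel
  exact vf_inj this

variable (hinv2 : σ * σ = 1) (horth : σᵀ * σ = 1)
include hinv2 horth

lemma fmap_dot (x : EuclideanSpace ℂ (Fin n)) :
    star (vf (fmap σ x)) ⬝ᵥ vf (fmap σ x) = star (vf x) ⬝ᵥ vf x := by
  have hP : (cmat (Pmat σ))ᵀ = cmat (Pmat σ) := by
    rw [← cmat_transpose, Pmat_symm σ hinv2 horth]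
  have hQ : (cmat (Qmat σ))ᵀ = cmat (Qmat σ) := by
    rw [← cmat_transpose, Qmat_symm σ hinv2 horth]
  have hPP : cmat (Pmat σ) * cmat (Pmat σ) = cmat (Pmat σ) := by
    rw [← cmat_mul, Pmat_mul_Pmat σ hinv2]
  have hQQ : cmat (Qmat σ) * cmat (Qmat σ) = cmat (Qmat σ) := by
    rw [← cmat_mul, Qmat_mul_Qmat σ hinv2]
  have hPQ : cmat (Pmat σ) * cmat (Qmat σ) = 0 := by
    rw [← cmat_mul, Pmat_mul_Qmat σ hinv2, cmat]; ext i j; simp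
  have hQP : cmat (Qmat σ) * cmat (Pmat σ) = 0 := by
    rw [← cmat_mul, Qmat_mul_Pmat σ hinv2, cmat]; ext i j; simp
  rw [fmap_vf]
  rw [star_add, star_smul, star_cmat_mulVec, star_cmat_mulVec, star_star]
  simp only [add_dotProduct, dotProduct_add, smul_dotProduct,
    dotProduct_smul, dot_mulVec_mulVec, hP, hQ, hPP, hQQ, hPQ, hQP,
    Matrix.zero_mulVec, dotProduct_zero, smul_zero, add_zero, zero_add, smul_smul,
    Complex.star_def, Complex.conj_I, mul_neg, neg_mul, Complex.I_mul_I, neg_neg, one_smul]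
  have hcomm : vf x ⬝ᵥ (cmat (Qmat σ) *ᵥ star (vf x))
      = star (vf x) ⬝ᵥ (cmat (Qmat σ) *ᵥ vf x) := by
    rw [dotProduct_comm, mulVec_dot, hQ]
  rw [hcomm, ← dotProduct_add, ← Matrix.add_mulVec, ← cmat_add, Pmat_add_Qmat,
    cmat_one, Matrix.one_mulVec]

lemma fmap_norm (x : EuclideanSpace ℂ (Fin n)) : ‖fmap σ x‖ = ‖x‖ :=
  norm_eq_of_dot _ _ (fmap_dot σ hinv2 horth x)

lemma fmap_isometry : Isometry (fmap σ) := by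
  refine Isometry.of_dist_eq fun x y => ?_
  rw [dist_eq_norm, dist_eq_norm, ← fmap_sub σ, fmap_norm σ hinv2 horth]

end fmapsec

lemma cmat_sub (σ τ : Matrix (Fin n) (Fin n) ℝ) : cmat (σ - τ) = cmat σ - cmat τ := by
  ext i j; simp [cmat]

lemma cmat_smulm (c : ℝ) (A : Matrix (Fin n) (Fin n) ℝ) :
    cmat (c • A) = (c : ℂ) • cmat A := by
  ext i j; simp [cmat]

section imsec
variable (σ : Matrix (Fin n) (Fin n) ℝ)

lemma cmat_Pmat : cmat (Pmat σ) = (2⁻¹ : ℂ) • (1 + cmat σ) := by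
  rw [Pmat, cmat_smulm, cmat_add, cmat_one]; norm_num

lemma cmat_Qmat : cmat (Qmat σ) = (2⁻¹ : ℂ) • (1 - cmat σ) := by
  rw [Qmat, cmat_smulm, cmat_sub, cmat_one]; norm_num

lemma cconj_vf (x : EuclideanSpace ℂ (Fin n)) : vf (cconj x) = star (vf x) := rfl

lemma mact_vf (σ' : Matrix (Fin n) (Fin n) ℝ) (x : EuclideanSpace ℂ (Fin n)) :
    vf (mact σ' x) = cmat σ' *ᵥ vf x := by
  ext i; simp [mact, vf, cmat, Matrix.mulVec, dotProduct]

lemma cond_iff (σ' : Matrix (Fin n) (Fin n) ℝ) (x : EuclideanSpace ℂ (Fin n)) :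
    cconj x = mact σ' x ↔ star (vf x) = cmat σ' *ᵥ vf x := by
  constructor
  · intro h
    rw [← cconj_vf, ← mact_vf]
    exact congrArg vf h
  · intro h
    have : vf (cconj x) = vf (mact σ' x) := by rw [cconj_vf, mact_vf]; exact h
    exact vf_inj this

variable (hinv2 : σ * σ = 1) (horth : σᵀ * σ = 1)
include hinv2 horth

lemma fmap_image (r : ℝ) :
    fmap σ '' ({x : EuclideanSpace ℂ (Fin n) | cconj x = x} ∩ Metric.ball 0 r)
      = {x : EuclideanSpace ℂ (Fin n) | cconj x = mact σ x} ∩ Metric.ball 0 r := by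
  have hσP : cmat σ * cmat (Pmat σ) = cmat (Pmat σ) := by
    rw [← cmat_mul, sigma_mul_Pmat σ hinv2]
  have hσQ : cmat σ * cmat (Qmat σ) = -(cmat (Qmat σ)) := by
    rw [← cmat_mul, sigma_mul_Qmat σ hinv2]
    ext i j; simp [cmat]
  ext y
  constructor
  · rintro ⟨x, ⟨hx1, hx2⟩, rfl⟩
    have hx1' : star (vf x) = vf x := by
      have := congrArg vf hx1; rw [cconj_vf] at this; exact this
    constructor
    · rw [Set.mem_setOf_eq, cond_iff, fmap_vf, hx1']
      rw [star_add, star_smul, star_cmat_mulVec, star_cmat_mulVec, hx1']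
      rw [Matrix.mulVec_add, Matrix.mulVec_smul, Matrix.mulVec_mulVec, Matrix.mulVec_mulVec,
        hσP, hσQ]
      simp only [Complex.star_def, Complex.conj_I, Matrix.neg_mulVec, smul_neg, neg_smul]
    · rw [Metric.mem_ball, dist_zero_right, fmap_norm σ hinv2 horth]
      simpa [Metric.mem_ball, dist_zero_right] using hx2
  · rintro ⟨hy1, hy2⟩
    rw [Set.mem_setOf_eq, cond_iff] at hy1
    set w := vf y with hwdef
    have hw2 : cmat σ *ᵥ star w = w := by
      have := congrArg star hy1
      rw [star_star, star_cmat_mulVec] at this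
      exact this.symm
    set x : EuclideanSpace ℂ (Fin n) :=
      ve (((1 - Complex.I) / 2) • w + ((1 + Complex.I) / 2) • star w) with hxdef
    have hvfx : vf x = ((1 - Complex.I) / 2) • w + ((1 + Complex.I) / 2) • star w := rfl
    have hxstar : star (vf x) = vf x := by
      rw [hvfx, star_add, star_smul, star_smul, star_star]
      have c1 : star ((1 - Complex.I) / 2) = (1 + Complex.I) / 2 := by
        simp [Complex.star_def, map_div₀, Complex.conj_I, sub_neg_eq_add]
      have c2 : star ((1 + Complex.I) / 2) = (1 - Complex.I) / 2 := by
        simp [Complex.star_def, map_div₀, Complex.conj_I]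
        ring
      rw [c1, c2, add_comm]
    have hx1 : cconj x = x := by
      have h : vf (cconj x) = vf x := by rw [cconj_vf, hxstar]
      exact vf_inj h
    have hw1 : cmat σ *ᵥ w = star w := hy1.symm
    have hPw : cmat (Pmat σ) *ᵥ w = (2⁻¹ : ℂ) • (w + star w) := by
      rw [cmat_Pmat, Matrix.smul_mulVec, Matrix.add_mulVec, Matrix.one_mulVec, hw1]
    have hPsw : cmat (Pmat σ) *ᵥ star w = (2⁻¹ : ℂ) • (star w + w) := by
      rw [cmat_Pmat, Matrix.smul_mulVec, Matrix.add_mulVec, Matrix.one_mulVec, hw2]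
    have hQw : cmat (Qmat σ) *ᵥ w = (2⁻¹ : ℂ) • (w - star w) := by
      rw [cmat_Qmat, Matrix.smul_mulVec, Matrix.sub_mulVec, Matrix.one_mulVec, hw1]
    have hQsw : cmat (Qmat σ) *ᵥ star w = (2⁻¹ : ℂ) • (star w - w) := by
      rw [cmat_Qmat, Matrix.smul_mulVec, Matrix.sub_mulVec, Matrix.one_mulVec, hw2]
    have hfx : fmap σ x = y := by
      have h : vf (fmap σ x) = w := by
        rw [fmap_vf, hxstar, hvfx, Matrix.mulVec_add, Matrix.mulVec_add,
          Matrix.mulVec_smul, Matrix.mulVec_smul, Matrix.mulVec_smul, Matrix.mulVec_smul,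
          hPw, hPsw, hQw, hQsw]
        funext i
        simp only [Pi.add_apply, Pi.smul_apply, Pi.sub_apply, smul_eq_mul]
        linear_combination (-(w i - (star w) i) / 2) * Complex.I_mul_I
      exact vf_inj h
    refine ⟨x, ⟨hx1, ?_⟩, hfx⟩
    rw [Metric.mem_ball, dist_zero_right]
    have : ‖fmap σ x‖ = ‖x‖ := fmap_norm σ hinv2 horth x
    rw [hfx] at this
    rw [← this]
    simpa [Metric.mem_ball, dist_zero_right] using hy2

end imsec


section meas

lemma cconj_isometry : Isometry (cconj : EuclideanSpace ℂ (Fin n) → EuclideanSpace ℂ (Fin n)) := by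
  refine Isometry.of_dist_eq fun x y => ?_
  rw [EuclideanSpace.dist_eq, EuclideanSpace.dist_eq]
  congr 1
  refine Finset.sum_congr rfl fun i _ => ?_
  have : dist (cconj x i) (cconj y i) = dist (x i) (y i) := by
    simp only [cconj]
    exact Complex.dist_conj_conj _ _
  rw [this]

noncomputable def mactL (σ : Matrix (Fin n) (Fin n) ℝ) :
    EuclideanSpace ℂ (Fin n) →ₗ[ℂ] EuclideanSpace ℂ (Fin n) where
  toFun := mact σ
  map_add' x y := by
    have h : vf (mact σ (x + y)) = vf (mact σ x) + vf (mact σ y) := by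
      rw [mact_vf, mact_vf, mact_vf, show vf (x + y) = vf x + vf y from rfl,
        Matrix.mulVec_add]
    exact vf_inj h
  map_smul' c x := by
    have h : vf (mact σ (c • x)) = c • vf (mact σ x) := by
      rw [mact_vf, mact_vf, show vf (c • x) = c • vf x from rfl, Matrix.mulVec_smul]
    exact vf_inj h

lemma mact_continuous (σ : Matrix (Fin n) (Fin n) ℝ) :
    Continuous (mact σ : EuclideanSpace ℂ (Fin n) → EuclideanSpace ℂ (Fin n)) :=
  (mactL σ).continuous_of_finiteDimensional

lemma isClosed_V (σ : Matrix (Fin n) (Fin n) ℝ) :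
    IsClosed {x : EuclideanSpace ℂ (Fin n) | cconj x = mact σ x} :=
  isClosed_eq cconj_isometry.continuous (mact_continuous σ)

end meas

section zerosec
variable (σ : Matrix (Fin n) (Fin n) ℝ) (M : Matrix (Fin n) (Fin n) ℂ)

noncomputable def mulL : EuclideanSpace ℂ (Fin n) →ₗ[ℂ] EuclideanSpace ℂ (Fin n) where
  toFun x := ve (M *ᵥ vf x)
  map_add' x y := by
    have h : vf (ve (M *ᵥ vf (x + y))) = vf (ve (M *ᵥ vf x) + ve (M *ᵥ vf y)) := by
      rw [show vf (x + y) = vf x + vf y from rfl, Matrix.mulVec_add]; rfl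
    exact vf_inj h
  map_smul' c x := by
    have h : vf (ve (M *ᵥ vf (c • x))) = vf (c • ve (M *ᵥ vf x)) := by
      rw [show vf (c • x) = c • vf x from rfl, Matrix.mulVec_smul]; rfl
    exact vf_inj h

/-- The real subspace cut out by the twisted-reality condition and a complex-linear equation. -/
noncomputable def pSub : Submodule ℝ (EuclideanSpace ℂ (Fin n)) where
  carrier := {x | cconj x = mact σ x ∧ M *ᵥ vf x = 0}
  add_mem' := by
    rintro x y ⟨hx1, hx2⟩ ⟨hy1, hy2⟩
    constructor
    · have h : vf (cconj (x + y)) = vf (mact σ (x + y)) := by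
        rw [cconj_vf, mact_vf, show vf (x + y) = vf x + vf y from rfl, star_add,
          Matrix.mulVec_add, ← mact_vf, ← mact_vf, ← hx1, ← hy1, cconj_vf, cconj_vf]
      exact vf_inj h
    · rw [show vf (x + y) = vf x + vf y from rfl, Matrix.mulVec_add, hx2, hy2, add_zero]
  zero_mem' := by
    constructor
    · have h : vf (cconj (0 : EuclideanSpace ℂ (Fin n))) = vf (mact σ 0) := by
        rw [cconj_vf, mact_vf, show vf (0 : EuclideanSpace ℂ (Fin n)) = 0 from rfl,
          star_zero, Matrix.mulVec_zero]
      exact vf_inj h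
    · rw [show vf (0 : EuclideanSpace ℂ (Fin n)) = 0 from rfl, Matrix.mulVec_zero]
  smul_mem' := by
    rintro c x ⟨hx1, hx2⟩
    constructor
    · have h : vf (cconj (c • x)) = vf (mact σ (c • x)) := by
        rw [cconj_vf, mact_vf, show vf (c • x) = (c : ℂ) • vf x from rfl, star_smul,
          Matrix.mulVec_smul, ← mact_vf, ← hx1, cconj_vf]
        congr 1
        simp [Complex.star_def, Complex.conj_ofReal]
      exact vf_inj h
    · rw [show vf (c • x) = (c : ℂ) • vf x from rfl, Matrix.mulVec_smul, hx2, smul_zero]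

lemma pSub_finrank_lt (hM : M ≠ 0) : Module.finrank ℝ (pSub σ M) < n := by
  classical
  set p := pSub σ M with hp
  let e : EuclideanSpace ℂ (Fin n) ≃ₗ[ℝ] EuclideanSpace ℂ (Fin n) :=
    (LinearEquiv.smulOfNeZero ℂ _ Complex.I Complex.I_ne_zero).restrictScalars ℝ
  have he : ∀ x : EuclideanSpace ℂ (Fin n), e x = Complex.I • x := fun x => rfl
  set p' := Submodule.map (e : EuclideanSpace ℂ (Fin n) →ₗ[ℝ] EuclideanSpace ℂ (Fin n)) p
    with hp'
  set L := LinearMap.ker (mulL M) with hL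
  -- L is a proper complex subspace
  have hMentry : ∃ i j, M i j ≠ 0 := by
    by_contra h
    push_neg at h
    exact hM (by ext i j; simpa using h i j)
  obtain ⟨i, j, hij⟩ := hMentry
  have hLtop : L ≠ ⊤ := by
    intro htop
    have hv : (ve (Pi.single j 1) : EuclideanSpace ℂ (Fin n)) ∈ L := htop ▸ Submodule.mem_top
    rw [LinearMap.mem_ker] at hv
    have hv' : (M *ᵥ Pi.single j (1 : ℂ)) = 0 := congrArg vf hv
    have := congrFun hv' i
    simp only [Matrix.mulVec, dotProduct, Pi.single_apply, mul_ite, mul_one, mul_zero,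
      Finset.sum_ite_eq', Finset.mem_univ, if_true, Pi.zero_apply] at this
    exact hij this
  have hLrank : Module.finrank ℂ L < n := by
    have := Submodule.finrank_lt hLtop
    rwa [finrank_euclideanSpace_fin] at this
  -- p and p' are disjoint
  have hdisj : p ⊓ p' = ⊥ := by
    rw [eq_bot_iff]
    rintro x ⟨hx, hx'⟩
    obtain ⟨y, hy, rfl⟩ := hx'
    have hyc : star (vf y) = cmat σ *ᵥ vf y := (cond_iff σ y).1 hy.1
    have hxc : star (vf (e y)) = cmat σ *ᵥ vf (e y) := (cond_iff σ (e y)).1 hx.1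
    have hvfe : vf (e y) = Complex.I • vf y := rfl
    rw [hvfe, star_smul, hyc, Matrix.mulVec_smul] at hxc
    have hu : (star Complex.I - Complex.I) • (cmat σ *ᵥ vf y) = 0 := by
      rw [sub_smul, hxc, sub_self]
    have hne : star Complex.I - Complex.I ≠ 0 := by
      have h2 : star Complex.I - Complex.I = -2 * Complex.I := by
        rw [Complex.star_def, Complex.conj_I]; ring
      rw [h2]
      simp [Complex.I_ne_zero]
    have hu0 : cmat σ *ᵥ vf y = 0 := by
      rcases smul_eq_zero.1 hu with h | h
      · exact absurd h hne
      · exact h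
    have hy0 : vf y = 0 := by
      have : star (vf y) = 0 := by rw [hyc, hu0]
      simpa using congrArg star this
    have : e y = 0 := by
      have h0 : vf (e y) = 0 := by rw [hvfe, hy0, smul_zero]
      exact vf_inj h0
    simp [this]
  -- p ⊔ p' is inside L viewed as a real subspace
  have hsup : p ⊔ p' ≤ L.restrictScalars ℝ := by
    refine sup_le ?_ ?_
    · intro x hx
      exact vf_inj hx.2
    · rintro x ⟨y, hy, rfl⟩
      have : M *ᵥ vf (e y) = 0 := by
        rw [show vf (e y) = Complex.I • vf y from rfl, Matrix.mulVec_smul, hy.2, smul_zero]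
      exact vf_inj this
  -- rank count
  have hrk1 : Module.finrank ℝ p + Module.finrank ℝ p'
      = Module.finrank ℝ (p ⊔ p' : Submodule ℝ (EuclideanSpace ℂ (Fin n))) := by
    have := Submodule.finrank_sup_add_finrank_inf_eq p p'
    rw [hdisj, finrank_bot, add_zero] at this
    exact this.symm
  have hrk2 : Module.finrank ℝ p' = Module.finrank ℝ p :=
    LinearEquiv.finrank_map_eq e p
  have hrk3 : Module.finrank ℝ (p ⊔ p' : Submodule ℝ (EuclideanSpace ℂ (Fin n)))
      ≤ Module.finrank ℝ (L.restrictScalars ℝ) :=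
    Submodule.finrank_mono hsup
  have hrk4 : Module.finrank ℝ (L.restrictScalars ℝ) = 2 * Module.finrank ℂ L := by
    have h1 : Module.finrank ℝ (L.restrictScalars ℝ) = Module.finrank ℝ L :=
      ((Submodule.restrictScalarsEquiv ℝ ℂ (EuclideanSpace ℂ (Fin n)) L).restrictScalars ℝ).finrank_eq
    have h2 : Module.finrank ℝ ℂ * Module.finrank ℂ L = Module.finrank ℝ L :=
      Module.finrank_mul_finrank ℝ ℂ L
    rw [h1, ← h2, Complex.finrank_real_complex]
  omega

lemma zero_meas (hM : M ≠ 0) :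
    μH[(n : ℝ)] {x : EuclideanSpace ℂ (Fin n) | cconj x = mact σ x ∧ M *ᵥ vf x = 0} = 0 := by
  set p := pSub σ M with hp
  have hiso : Isometry (Subtype.val : ↥p → EuclideanSpace ℂ (Fin n)) := by
    refine Isometry.of_dist_eq fun a b => ?_
    rw [dist_eq_norm, dist_eq_norm]
    rfl
  have hdim : dimH (p : Set (EuclideanSpace ℂ (Fin n)))
      ≤ (Module.finrank ℝ ↥p : ℝ≥0∞) := by
    have h1 : (p : Set (EuclideanSpace ℂ (Fin n))) = Subtype.val '' (Set.univ : Set ↥p) := by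
      rw [Set.image_univ, Subtype.range_coe]
    rw [h1]
    calc dimH (Subtype.val '' (Set.univ : Set ↥p))
        ≤ dimH (Set.univ : Set ↥p) := hiso.lipschitz.dimH_image_le _
      _ = (Module.finrank ℝ ↥p : ℝ≥0∞) := Real.dimH_univ_eq_finrank ↥p
  have hlt : dimH (p : Set (EuclideanSpace ℂ (Fin n))) < ((n : ℝ≥0) : ℝ≥0∞) := by
    refine lt_of_le_of_lt hdim ?_
    have hfr := pSub_finrank_lt σ M hM
    have : ((n : ℝ≥0) : ℝ≥0∞) = (n : ℝ≥0∞) := by simp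
    rw [this]
    exact_mod_cast hfr
  have h0 : μH[((n : ℝ≥0) : ℝ)] (p : Set (EuclideanSpace ℂ (Fin n))) = 0 :=
    hausdorffMeasure_of_dimH_lt hlt
  have h0' : μH[(n : ℝ)] (p : Set (EuclideanSpace ℂ (Fin n))) = 0 := by
    simpa using h0
  refine measure_mono_null (fun x hx => ?_) h0'
  show x ∈ p
  exact hx

end zerosec

lemma mact_one (x : EuclideanSpace ℂ (Fin n)) : mact 1 x = x := by
  have h : vf (mact 1 x) = vf x := by
    rw [mact_vf, cmat_one, Matrix.one_mulVec]
  exact vf_inj h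


/-- For a finite subgroup `G ⊆ O(n, ℝ)` acting ℂ-linearly on `ℂⁿ`,
the union `W` of the twisted real subspaces `{x : x̄ = σx}` over `σ ∈ G` satisfies, for every
radius `r > 0`,
`𝓗ⁿ(W ∩ B(0,r)) = #Inv(G) • 𝓗ⁿ({x : x̄ = x} ∩ B(0,r))`,
where `Inv(G) = {σ ∈ G : σ² = 1}`. -/
theorem stmt0 (n : ℕ) (G : Finset (Matrix (Fin n) (Fin n) ℝ))
    (hone : (1 : Matrix (Fin n) (Fin n) ℝ) ∈ G)
    (hmul : ∀ σ ∈ G, ∀ τ ∈ G, σ * τ ∈ G)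
    (hinv : ∀ σ ∈ G, ∃ τ ∈ G, σ * τ = 1)
    (horth : ∀ σ ∈ G, σᵀ * σ = 1)
    (r : ℝ) (hr : 0 < r) :
    μH[(n : ℝ)] ({x : EuclideanSpace ℂ (Fin n) | ∃ σ ∈ G, cconj x = mact σ x}
        ∩ Metric.ball 0 r)
      = (Set.ncard {σ : Matrix (Fin n) (Fin n) ℝ | σ ∈ G ∧ σ * σ = 1} : ℝ≥0∞) *
        μH[(n : ℝ)] ({x : EuclideanSpace ℂ (Fin n) | cconj x = x} ∩ Metric.ball 0 r) := by
  classical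
  set μ : Measure (EuclideanSpace ℂ (Fin n)) := μH[(n : ℝ)] with hμ
  set B : Set (EuclideanSpace ℂ (Fin n)) := Metric.ball 0 r with hB
  set f : Matrix (Fin n) (Fin n) ℝ → Set (EuclideanSpace ℂ (Fin n)) :=
    fun σ => {x | cconj x = mact σ x} ∩ B with hf
  -- step 1 : the union
  have hunion : {x : EuclideanSpace ℂ (Fin n) | ∃ σ ∈ G, cconj x = mact σ x} ∩ B
      = ⋃ σ ∈ G, f σ := by
    ext x
    simp only [Set.mem_inter_iff, Set.mem_setOf_eq, Set.mem_iUnion, hf]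
    tauto
  -- AE disjointness
  have hdisj : (↑G : Set (Matrix (Fin n) (Fin n) ℝ)).Pairwise (Function.onFun (MeasureTheory.AEDisjoint μ) f) := by
    intro σ hσ τ hτ hστ
    have hMne : cmat (σ - τ) ≠ 0 := by
      intro h
      apply hστ
      apply cmat_inj
      exact sub_eq_zero.1 (by rw [← cmat_sub]; exact h)
    refine measure_mono_null ?_ (zero_meas (n := n) σ (cmat (σ - τ)) hMne)
    rintro x ⟨⟨hx1, _⟩, ⟨hx2, _⟩⟩
    refine ⟨hx1, ?_⟩
    have h1 : cmat σ *ᵥ vf x = cmat τ *ᵥ vf x := by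
      rw [← mact_vf, ← mact_vf, ← hx1, ← hx2]
    rw [cmat_sub, Matrix.sub_mulVec, h1, sub_self]
  -- measurability
  have hmeas : ∀ σ ∈ G, MeasurableSet (f σ) := fun σ _ =>
    (isClosed_V σ).measurableSet.inter measurableSet_ball
  -- step 2 : additivity
  have hsum : μ ({x : EuclideanSpace ℂ (Fin n) | ∃ σ ∈ G, cconj x = mact σ x} ∩ B)
      = ∑ σ ∈ G, μ (f σ) := by
    rw [hunion]
    exact measure_biUnion_finset₀ hdisj fun σ hσ => (hmeas σ hσ).nullMeasurableSet
  -- step 3 : non-involutions contribute zero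
  have hzero : ∀ σ ∈ G, σ * σ ≠ 1 → μ (f σ) = 0 := by
    intro σ hσ hσ2
    have hMne : cmat (σ * σ - 1) ≠ 0 := by
      intro h
      apply hσ2
      apply cmat_inj
      exact sub_eq_zero.1 (by rw [← cmat_sub]; exact h)
    refine measure_mono_null ?_ (zero_meas (n := n) σ (cmat (σ * σ - 1)) hMne)
    rintro x ⟨hx1, _⟩
    refine ⟨hx1, ?_⟩
    have h1 : star (vf x) = cmat σ *ᵥ vf x := (cond_iff σ x).1 hx1
    have h2 : vf x = cmat (σ * σ) *ᵥ vf x := by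
      have := congrArg star h1
      rw [star_star, star_cmat_mulVec, h1, Matrix.mulVec_mulVec, ← cmat_mul] at this
      exact this
    rw [cmat_sub, Matrix.sub_mulVec, cmat_one, Matrix.one_mulVec, ← h2, sub_self]
  -- step 4 : involutions all have the same measure
  have hsame : ∀ σ ∈ G, σ * σ = 1 →
      μ (f σ) = μ ({x : EuclideanSpace ℂ (Fin n) | cconj x = x} ∩ B) := by
    intro σ hσ hσ2
    have him := fmap_image σ hσ2 (horth σ hσ) r
    have hiso := fmap_isometry σ hσ2 (horth σ hσ)
    have := hiso.hausdorffMeasure_image (d := (n : ℝ))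
      (Or.inl (by positivity)) ({x : EuclideanSpace ℂ (Fin n) | cconj x = x} ∩ B)
    rw [him] at this
    exact this.symm ▸ this ▸ rfl
  -- step 5 : combine
  set c := μ ({x : EuclideanSpace ℂ (Fin n) | cconj x = x} ∩ B) with hc
  have hsplit : ∑ σ ∈ G, μ (f σ)
      = ∑ σ ∈ G.filter (fun σ => σ * σ = 1), μ (f σ)
        + ∑ σ ∈ G.filter (fun σ => ¬ σ * σ = 1), μ (f σ) :=
    (Finset.sum_filter_add_sum_filter_not G _ _).symm
  have hzero' : ∑ σ ∈ G.filter (fun σ => ¬ σ * σ = 1), μ (f σ) = 0 := by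
    refine Finset.sum_eq_zero fun σ hσ => ?_
    rw [Finset.mem_filter] at hσ
    exact hzero σ hσ.1 hσ.2
  have hmain : ∑ σ ∈ G.filter (fun σ => σ * σ = 1), μ (f σ)
      = ((G.filter (fun σ => σ * σ = 1)).card : ℝ≥0∞) * c := by
    calc ∑ σ ∈ G.filter (fun σ => σ * σ = 1), μ (f σ)
        = ∑ _σ ∈ G.filter (fun σ => σ * σ = 1), c :=
          Finset.sum_congr rfl (fun σ hσ => by
            rw [Finset.mem_filter] at hσ
            exact hsame σ hσ.1 hσ.2)
      _ = ((G.filter (fun σ => σ * σ = 1)).card : ℝ≥0∞) * c := by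
          rw [Finset.sum_const, nsmul_eq_mul]
  have hcard : Set.ncard {σ : Matrix (Fin n) (Fin n) ℝ | σ ∈ G ∧ σ * σ = 1}
      = (G.filter (fun σ => σ * σ = 1)).card := by
    have hset : {σ : Matrix (Fin n) (Fin n) ℝ | σ ∈ G ∧ σ * σ = 1}
        = ↑(G.filter (fun σ => σ * σ = 1)) := by
      ext τ; simp [Finset.mem_filter]
    rw [hset, Set.ncard_coe_finset]
  calc μ ({x : EuclideanSpace ℂ (Fin n) | ∃ σ ∈ G, cconj x = mact σ x} ∩ B)
      = ∑ σ ∈ G, μ (f σ) := hsum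
    _ = ((G.filter (fun σ => σ * σ = 1)).card : ℝ≥0∞) * c := by
        rw [hsplit, hzero', hmain, add_zero]
    _ = (Set.ncard {σ : Matrix (Fin n) (Fin n) ℝ | σ ∈ G ∧ σ * σ = 1} : ℝ≥0∞) * c := by
        rw [hcard]
end

section
/- Let A be an n×n real matrix with Aᵏ = id for some odd positive integer k, acting ℂ-linearly on ℂⁿ. If x ∈ ℂⁿ satisfies x̄ = A·x, where x̄ denotes entrywise complex conjugation, then x is real, i.e., x̄ = x. -/
open Matrix

/-- The ℂ-linear action of a real `n × n` matrix on `ℂⁿ`. -/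
noncomputable def actC {n : ℕ} (g : Matrix (Fin n) (Fin n) ℝ) (x : Fin n → ℂ) : Fin n → ℂ :=
  (g.map fun a => (a : ℂ)).mulVec x

/-- Entrywise complex conjugation on `ℂⁿ`. -/
noncomputable def conjV {n : ℕ} (x : Fin n → ℂ) : Fin n → ℂ :=
  fun i => (starRingEnd ℂ) (x i)

lemma actC_mul {n : ℕ} (A B : Matrix (Fin n) (Fin n) ℝ) (x : Fin n → ℂ) :
    actC A (actC B x) = actC (A * B) x := by
  funext i
  simp [actC, mulVec_mulVec, mulVec, dotProduct, Matrix.mul_apply, Matrix.map_apply,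
    Finset.mul_sum, Finset.sum_mul, mul_assoc]
  rw [Finset.sum_comm]

lemma actC_one {n : ℕ} (x : Fin n → ℂ) : actC 1 x = x := by
  simp [actC, Matrix.map_one]

lemma conjV_actC {n : ℕ} (A : Matrix (Fin n) (Fin n) ℝ) (x : Fin n → ℂ) :
    conjV (actC A x) = actC A (conjV x) := by
  funext i
  simp [conjV, actC, mulVec, dotProduct, map_sum, Complex.conj_ofReal]

lemma conjV_conjV {n : ℕ} (x : Fin n → ℂ) : conjV (conjV x) = x := by
  funext i; simp [conjV]

/-- If `A` is a real `n × n` matrix with `Aᵏ = 1` for an odd positive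
integer `k`, and `x ∈ ℂⁿ` satisfies `x̄ = A·x`, then `x` is real. -/
theorem stmt5 (n : ℕ) (A : Matrix (Fin n) (Fin n) ℝ) (k : ℕ) (hk : Odd k) (hk0 : 0 < k)
    (hA : A ^ k = 1) (x : Fin n → ℂ) (hx : conjV x = actC A x) :
    conjV x = x := by
  have h2 : actC (A ^ 2) x = x := by
    have := congrArg conjV hx
    rw [conjV_conjV, conjV_actC, hx, actC_mul] at this
    rw [pow_two]; exact this.symm
  have hpow : ∀ m : ℕ, actC (A ^ (2 * m)) x = x := by
    intro m
    induction m with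
    | zero => simpa using actC_one x
    | succ m ih =>
        have : A ^ (2 * (m + 1)) = A ^ 2 * A ^ (2 * m) := by
          rw [show 2 * (m + 1) = 2 + 2 * m by ring, pow_add]
        rw [this, ← actC_mul, ih, h2]
  obtain ⟨m, hm⟩ := hk
  have hAx : actC A x = x := by
    have hk1 : k + 1 = 2 * (m + 1) := by omega
    have : A ^ (k + 1) = A := by rw [pow_succ, hA, one_mul]
    have := hpow (m + 1)
    rwa [← hk1, ‹A ^ (k+1) = A›] at this
  rw [hx, hAx]
end

section
/- Let G be a finite group of n×n real matrices acting ℂ-linearly on ℂⁿ, let σ ∈ G, and let v ∈ ℝⁿ be a nonzero real vector with σ·v = −v. Let ε be a nonzero real number and set w = iεv ∈ ℂⁿ. Then: (a) for every G-invariant polynomial p in n variables with real coefficients (p(g·x) = p(x) as polynomials for all g ∈ G), the evaluation of p at w (with coefficients regarded in ℂ) is a real number; and (b) w does not lie in the G-orbit of any real vector, i.e., there is no g ∈ G and y ∈ ℝⁿ with w = g·y. -/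
open Matrix

/-- Substitution of the linear action of a real matrix into the variables of a real
multivariate polynomial: `x ↦ g·x`. -/
noncomputable def polyAct {n : ℕ} (g : Matrix (Fin n) (Fin n) ℝ)
    (p : MvPolynomial (Fin n) ℝ) : MvPolynomial (Fin n) ℝ :=
  MvPolynomial.aeval (fun i => ∑ j, MvPolynomial.C (g i j) * MvPolynomial.X j) p

lemma aeval_polyAct {n : ℕ} (g : Matrix (Fin n) (Fin n) ℝ)
    (p : MvPolynomial (Fin n) ℝ) (x : Fin n → ℂ) :
    MvPolynomial.aeval x (polyAct g p) = MvPolynomial.aeval (actC g x) p := by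
  unfold polyAct
  rw [show (MvPolynomial.aeval x (MvPolynomial.aeval
      (fun i => ∑ j, MvPolynomial.C (g i j) * MvPolynomial.X j) p)) =
    ((MvPolynomial.aeval x).comp
      (MvPolynomial.aeval (fun i => ∑ j, MvPolynomial.C (g i j) * MvPolynomial.X j))) p from rfl,
    MvPolynomial.comp_aeval]
  have h : (fun i => MvPolynomial.aeval x (∑ j, MvPolynomial.C (g i j) * MvPolynomial.X j))
      = actC g x := by
    funext i
    simp [actC, Matrix.mulVec, dotProduct, Matrix.map_apply, Algebra.algebraMap_eq_smul_one,
    Complex.real_smul]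
  rw [h]

/-- Let `G` be a finite group of real `n × n` matrices, `σ ∈ G`, and
`v ∈ ℝⁿ` a nonzero vector with `σ·v = -v`. For `ε ≠ 0` set `w = iεv ∈ ℂⁿ`. Then (a) every
`G`-invariant real polynomial takes a real value at `w`, and (b) `w` is not in the `G`-orbit
of any real vector. -/
theorem stmt6 (n : ℕ) (G : Finset (Matrix (Fin n) (Fin n) ℝ))
    (hone : (1 : Matrix (Fin n) (Fin n) ℝ) ∈ G)
    (hmul : ∀ σ ∈ G, ∀ τ ∈ G, σ * τ ∈ G)
    (hinv : ∀ σ ∈ G, ∃ τ ∈ G, σ * τ = 1)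
    (σ : Matrix (Fin n) (Fin n) ℝ) (hσ : σ ∈ G)
    (v : Fin n → ℝ) (hv : v ≠ 0) (hσv : σ.mulVec v = -v)
    (ε : ℝ) (hε : ε ≠ 0) :
    (∀ p : MvPolynomial (Fin n) ℝ, (∀ g ∈ G, polyAct g p = p) →
      (starRingEnd ℂ) (MvPolynomial.aeval (fun i => Complex.I * (ε : ℂ) * (v i : ℂ)) p)
        = MvPolynomial.aeval (fun i => Complex.I * (ε : ℂ) * (v i : ℂ)) p) ∧
    ¬ ∃ g ∈ G, ∃ y : Fin n → ℝ,
        (fun i => Complex.I * (ε : ℂ) * (v i : ℂ)) = actC g (fun i => (y i : ℂ)) := by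
  set w : Fin n → ℂ := fun i => Complex.I * (ε : ℂ) * (v i : ℂ) with hw
  constructor
  · intro p hp
    have hconj : (starRingEnd ℂ) (MvPolynomial.aeval w p) =
        MvPolynomial.aeval (fun i => (starRingEnd ℂ) (w i)) p := by
      have := MvPolynomial.comp_aeval (φ := Complex.conjAe.toAlgHom) (f := w) (R := ℝ)
      exact congrFun (congrArg DFunLike.coe this) p
    have hσw : actC σ w = fun i => (starRingEnd ℂ) (w i) := by
      funext i
      have h1 : (σ.map fun a => (a : ℂ)).mulVec w i =
          Complex.I * (ε : ℂ) * ((σ.mulVec v i : ℝ) : ℂ) := by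
        simp only [Matrix.mulVec, dotProduct, Matrix.map_apply, hw]
        push_cast
        rw [Finset.mul_sum]
        congr 1; funext j; ring
      simp only [actC]
      rw [h1]
      simp only [hσv, hw]
      simp [Complex.ext_iff]
    rw [hconj, ← hσw, ← aeval_polyAct, hp σ hσ]
  · rintro ⟨g, hg, y, hy⟩
    obtain ⟨i, hi⟩ : ∃ i, v i ≠ 0 := by
      by_contra h
      push_neg at h
      exact hv (funext h)
    have := congrFun hy i
    have him : (actC g (fun i => (y i : ℂ)) i).im = 0 := by
      simp [actC, Matrix.mulVec, dotProduct, Matrix.map_apply, Complex.im_sum]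
    rw [← this] at him
    simp [hw, Complex.ext_iff] at him
    rcases him with h | h
    · exact hε h
    · exact hi h
end

section
/- Let σ be a permutation of {1,…,n} with σ² = id, and let P_σ be its n×n permutation matrix over ℂ. Then there exists a unitary matrix A ∈ U(n) such that the entrywise complex conjugate of A equals A·P_σ. -/
open Matrix

noncomputable def permMat {n : ℕ} (σ : Equiv.Perm (Fin n)) : Matrix (Fin n) (Fin n) ℂ :=
  Matrix.of fun i j => if j = σ i then (1 : ℂ) else 0

lemma permMat_mul {n : ℕ} (σ τ : Equiv.Perm (Fin n)) :
    permMat σ * permMat τ = permMat (τ * σ) := by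
  ext i j
  rw [Matrix.mul_apply, Finset.sum_eq_single (σ i)]
  · simp [permMat]; congr
  · intro b _ hb; simp [permMat, hb]
  · intro h; simp at h

lemma permMat_one {n : ℕ} : permMat (1 : Equiv.Perm (Fin n)) = 1 := by
  ext i j
  simp [permMat, Matrix.one_apply, eq_comm]

lemma permMat_star {n : ℕ} (σ : Equiv.Perm (Fin n)) :
    star (permMat σ) = permMat σ⁻¹ := by
  ext i j
  have h : (i = σ j) ↔ (j = σ⁻¹ i) := by
    constructor
    · rintro rfl; simp
    · rintro rfl; simp
  simp only [Matrix.star_apply, permMat, Matrix.of_apply, apply_ite, star_one, star_zero, h]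
  split_ifs <;> simp

/-- For every involutive permutation `σ` of `{1,…,n}` there is a unitary
matrix `A ∈ U(n)` whose entrywise complex conjugate equals `A · P_σ`. -/
theorem stmt11 (n : ℕ) (σ : Equiv.Perm (Fin n)) (hσ : σ * σ = 1) :
    ∃ A : Matrix (Fin n) (Fin n) ℂ, A ∈ Matrix.unitaryGroup (Fin n) ℂ ∧
      A.map (starRingEnd ℂ) = A * permMat σ := by
  set α : ℂ := (1 + Complex.I) / 2 with hα
  set β : ℂ := (1 - Complex.I) / 2 with hβ
  set P := permMat σ with hPdef
  have hinv : σ⁻¹ = σ := mul_eq_one_iff_inv_eq.mp hσ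
  have hP2 : P * P = 1 := by rw [hPdef, permMat_mul, hσ, permMat_one]
  have hPs : star P = P := by rw [hPdef, permMat_star, hinv]
  have hca : (starRingEnd ℂ) α = β := by
    rw [hα, hβ, map_div₀, map_add, _root_.map_one, Complex.conj_I, Complex.conj_ofNat]; ring
  have hcb : (starRingEnd ℂ) β = α := by
    rw [hα, hβ, map_div₀, map_sub, _root_.map_one, Complex.conj_I, Complex.conj_ofNat]; ring
  have hab : α * β + β * α = 1 := by
    rw [hα, hβ]; ring_nf; rw [Complex.I_sq]; ring
  have haa : α * α + β * β = 0 := by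
    rw [hα, hβ]; ring_nf; rw [Complex.I_sq]; ring
  have expand : ∀ a b c d : ℂ,
      (a • (1 : Matrix (Fin n) (Fin n) ℂ) + b • P) * (c • 1 + d • P)
        = (a * c + b * d) • 1 + (a * d + b * c) • P := by
    intro a b c d
    simp only [add_mul, mul_add, Matrix.smul_mul, Matrix.mul_smul, smul_smul, one_mul,
      mul_one, hP2]
    module
  have hstar : star (α • (1 : Matrix (Fin n) (Fin n) ℂ) + β • P) = β • 1 + α • P := by
    simp [star_smul, hPs, hca, hcb]
  refine ⟨α • 1 + β • P, ⟨?_, ?_⟩, ?_⟩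
  · show star _ * _ = 1
    rw [hstar, expand,
      show β * β + α * α = 0 by rw [add_comm]; exact haa,
      show β * α + α * β = 1 by rw [add_comm]; exact hab]
    simp
  · show _ * star _ = 1
    rw [hstar, expand, haa, hab]
    simp
  · have hmap : (α • (1 : Matrix (Fin n) (Fin n) ℂ) + β • P).map (starRingEnd ℂ)
        = β • 1 + α • P := by
      ext i j
      simp only [Matrix.map_apply, Matrix.add_apply, Matrix.smul_apply, Matrix.one_apply,
        hPdef, permMat, Matrix.of_apply, smul_eq_mul, _root_.map_add, _root_.map_mul, apply_ite,
        _root_.map_one, _root_.map_zero, hca, hcb]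
      split_ifs <;> ring
    rw [hmap, Matrix.add_mul, Matrix.smul_mul, Matrix.smul_mul, one_mul, hP2]
    module
end

section
/- For ρ > 0 set ζ(ρ) = √ρ·e^{iπ/12} ∈ ℂ, and consider the three collinear complex particles x₁ = ζ(ρ), x₂ = −conj(ζ(ρ)), x₃ = 0 with complex squared separations s₁₃ = ζ², s₂₃ = (conj ζ)², s₁₂ = (ζ + conj ζ)². Then for every ρ > 0 all three squared separations are nonzero, the Lennard-Jones energy E(ρ) = Σ_{pairs} (s⁻⁶ − s⁻³) is a real number (its imaginary part vanishes), and E(ρ) tends to −∞ as ρ → 0⁺. In fact s₁₃⁻⁶ + s₂₃⁻⁶ = −2ρ⁻⁶ while s₁₂⁻⁶ = Cρ⁻⁶ with C = (4cos²(π/12))⁻⁶ < 2, so the ρ⁻⁶ terms contribute −(2−C)ρ⁻⁶. -/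
open Filter

/-- `ζ(ρ) = √ρ · e^{iπ/12}`. -/
noncomputable def zetaLJ (ρ : ℝ) : ℂ :=
  (Real.sqrt ρ : ℂ) * Complex.exp (Complex.I * ((Real.pi / 12 : ℝ) : ℂ))

/-- Complex squared separation of particles 1 and 3: `s₁₃ = ζ²`. -/
noncomputable def s13 (ρ : ℝ) : ℂ := zetaLJ ρ ^ 2

/-- Complex squared separation of particles 2 and 3: `s₂₃ = (conj ζ)²`. -/
noncomputable def s23 (ρ : ℝ) : ℂ := (starRingEnd ℂ) (zetaLJ ρ) ^ 2

/-- Complex squared separation of particles 1 and 2: `s₁₂ = (ζ + conj ζ)²`. -/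
noncomputable def s12 (ρ : ℝ) : ℂ := (zetaLJ ρ + (starRingEnd ℂ) (zetaLJ ρ)) ^ 2

/-- The Lennard-Jones pair potential on a complex squared separation: `φ(s) = s⁻⁶ - s⁻³`. -/
noncomputable def phiLJ (s : ℂ) : ℂ := (s ^ 6)⁻¹ - (s ^ 3)⁻¹

/-- The total Lennard-Jones energy of the three-particle configuration. -/
noncomputable def Elj (ρ : ℝ) : ℂ := phiLJ (s13 ρ) + phiLJ (s23 ρ) + phiLJ (s12 ρ)

lemma zeta_pow (ρ : ℝ) (hρ : 0 ≤ ρ) (n : ℕ) :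
    zetaLJ ρ ^ (2 * n) = (ρ : ℂ) ^ n * Complex.exp (Complex.I * ((2 * n * (Real.pi / 12) : ℝ) : ℂ)) := by
  unfold zetaLJ
  rw [mul_pow, ← Complex.exp_nat_mul]
  have h1 : ((Real.sqrt ρ : ℂ)) ^ (2 * n) = (ρ : ℂ) ^ n := by
    rw [pow_mul]
    norm_cast
    rw [Real.sq_sqrt hρ]
  rw [h1]
  push_cast
  ring_nf

lemma s13_pow6 (ρ : ℝ) (hρ : 0 ≤ ρ) : s13 ρ ^ 6 = -(ρ : ℂ) ^ 6 := by
  unfold s13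
  rw [← pow_mul, zeta_pow ρ hρ 6]
  have : ((2 * (6:ℕ) * (Real.pi / 12) : ℝ) : ℂ) = (Real.pi : ℂ) := by push_cast; ring
  rw [this, mul_comm Complex.I, Complex.exp_pi_mul_I]
  ring

lemma s13_pow3 (ρ : ℝ) (hρ : 0 ≤ ρ) : s13 ρ ^ 3 = (ρ : ℂ) ^ 3 * Complex.I := by
  unfold s13
  rw [← pow_mul, zeta_pow ρ hρ 3]
  have h : ((2 * (3:ℕ) * (Real.pi / 12) : ℝ) : ℂ) = ((Real.pi / 2 : ℝ) : ℂ) := by push_cast; ring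
  rw [h, mul_comm Complex.I, Complex.exp_mul_I]
  norm_cast
  rw [Real.cos_pi_div_two, Real.sin_pi_div_two]
  simp

lemma s23_eq (ρ : ℝ) : s23 ρ = (starRingEnd ℂ) (s13 ρ) := by
  unfold s23 s13; rw [map_pow]

lemma s23_pow6 (ρ : ℝ) (hρ : 0 ≤ ρ) : s23 ρ ^ 6 = -(ρ : ℂ) ^ 6 := by
  rw [s23_eq, ← map_pow, s13_pow6 ρ hρ, map_neg, ← Complex.ofReal_pow, Complex.conj_ofReal]

lemma s23_pow3 (ρ : ℝ) (hρ : 0 ≤ ρ) : s23 ρ ^ 3 = -((ρ : ℂ) ^ 3 * Complex.I) := by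
  rw [s23_eq, ← map_pow, s13_pow3 ρ hρ, map_mul, Complex.conj_I, ← Complex.ofReal_pow,
    Complex.conj_ofReal]
  ring

lemma s12_eq (ρ : ℝ) (hρ : 0 ≤ ρ) :
    s12 ρ = ((4 * ρ * Real.cos (Real.pi / 12) ^ 2 : ℝ) : ℂ) := by
  unfold s12
  have h : zetaLJ ρ + (starRingEnd ℂ) (zetaLJ ρ)
      = ((2 * Real.sqrt ρ * Real.cos (Real.pi / 12) : ℝ) : ℂ) := by
    rw [Complex.add_conj]
    unfold zetaLJ
    rw [mul_comm Complex.I, Complex.re_ofReal_mul, Complex.exp_ofReal_mul_I_re]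
    push_cast
    ring
  rw [h]
  norm_cast
  rw [mul_pow, mul_pow, Real.sq_sqrt hρ]
  ring

/-- A real formula for the energy. -/
noncomputable def EljRe (ρ : ℝ) : ℝ :=
  -2 / ρ ^ 6 + ((4 * ρ * Real.cos (Real.pi / 12) ^ 2) ^ 6)⁻¹
    - ((4 * ρ * Real.cos (Real.pi / 12) ^ 2) ^ 3)⁻¹

lemma Elj_eq (ρ : ℝ) (hρ : 0 < ρ) : Elj ρ = ((EljRe ρ : ℝ) : ℂ) := by
  unfold Elj phiLJ EljRe
  rw [s13_pow6 ρ hρ.le, s13_pow3 ρ hρ.le, s23_pow6 ρ hρ.le, s23_pow3 ρ hρ.le, s12_eq ρ hρ.le]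
  simp only [inv_neg]
  push_cast
  ring

lemma cos_pi_div_twelve_pos : 0 < Real.cos (Real.pi / 12) := by
  apply Real.cos_pos_of_mem_Ioo
  constructor <;> [skip; skip] <;> nlinarith [Real.pi_pos]

lemma half_lt_cos : (1 / 2 : ℝ) < Real.cos (Real.pi / 12) := by
  have := Real.cos_lt_cos_of_nonneg_of_le_pi (x := Real.pi / 12) (y := Real.pi / 3)
    (by positivity) (by linarith [Real.pi_pos]) (by linarith [Real.pi_pos])
  rwa [Real.cos_pi_div_three] at this

/-- **unbounded dive of the Lennard-Jones potential.** For all `ρ > 0` the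
squared separations are nonzero, the energy `E(ρ)` is real, `E(ρ) → -∞` as `ρ → 0⁺`, and
the explicit identities `s₁₃⁻⁶ + s₂₃⁻⁶ = -2ρ⁻⁶`, `s₁₂⁻⁶ = Cρ⁻⁶` with
`C = (4cos²(π/12))⁻⁶ < 2` hold. -/
theorem stmt15 :
    (∀ ρ : ℝ, 0 < ρ → s13 ρ ≠ 0 ∧ s23 ρ ≠ 0 ∧ s12 ρ ≠ 0) ∧
    (∀ ρ : ℝ, 0 < ρ → (Elj ρ).im = 0) ∧
    Tendsto (fun ρ : ℝ => (Elj ρ).re) (nhdsWithin 0 (Set.Ioi 0)) atBot ∧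
    (∀ ρ : ℝ, 0 < ρ →
      (s13 ρ ^ 6)⁻¹ + (s23 ρ ^ 6)⁻¹ = ((-2 / ρ ^ 6 : ℝ) : ℂ) ∧
      (s12 ρ ^ 6)⁻¹ = ((((4 * Real.cos (Real.pi / 12) ^ 2) ^ 6)⁻¹ / ρ ^ 6 : ℝ) : ℂ)) ∧
    ((4 * Real.cos (Real.pi / 12) ^ 2 : ℝ) ^ 6)⁻¹ < 2 := by
  have hc := cos_pi_div_twelve_pos
  have hc2 := half_lt_cos
  set c := Real.cos (Real.pi / 12) with hcdef
  have hC1 : (1 : ℝ) ≤ 4 * c ^ 2 := by nlinarith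
  have hC6 : (1 : ℝ) ≤ (4 * c ^ 2) ^ 6 := one_le_pow₀ hC1
  have hClt : ((4 * c ^ 2 : ℝ) ^ 6)⁻¹ < 2 := by
    have := inv_le_one_of_one_le₀ hC6
    linarith
  refine ⟨?_, ?_, ?_, ?_, hClt⟩
  · intro ρ hρ
    have hρ6 : (ρ : ℂ) ^ 6 ≠ 0 := by
      simp [Complex.ofReal_ne_zero.mpr hρ.ne']
    refine ⟨?_, ?_, ?_⟩
    · intro h
      have h6 := s13_pow6 ρ hρ.le
      rw [h] at h6
      simp only [ne_eq, zero_pow, OfNat.ofNat_ne_zero, not_false_eq_true] at h6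
      exact hρ6 (by linear_combination h6)
    · intro h
      have h6 := s23_pow6 ρ hρ.le
      rw [h] at h6
      simp only [ne_eq, zero_pow, OfNat.ofNat_ne_zero, not_false_eq_true] at h6
      exact hρ6 (by linear_combination h6)
    · rw [s12_eq ρ hρ.le]
      exact_mod_cast (by positivity : (0:ℝ) < 4 * ρ * c ^ 2).ne'
  · intro ρ hρ
    rw [Elj_eq ρ hρ]
    exact Complex.ofReal_im _
  · have hEv : ∀ᶠ ρ in nhdsWithin (0:ℝ) (Set.Ioi 0),
        (Elj ρ).re ≤ (((4 * c ^ 2 : ℝ) ^ 6)⁻¹ - 2) * (ρ⁻¹) ^ 6 := by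
      filter_upwards [self_mem_nhdsWithin] with ρ hρ
      have hρ : (0:ℝ) < ρ := hρ
      rw [Elj_eq ρ hρ, Complex.ofReal_re]
      unfold EljRe
      have h1 : (0:ℝ) < ((4 * ρ * c ^ 2) ^ 3)⁻¹ := by positivity
      have h2 : -2 / ρ ^ 6 + ((4 * ρ * c ^ 2) ^ 6)⁻¹
          = (((4 * c ^ 2 : ℝ) ^ 6)⁻¹ - 2) * (ρ⁻¹) ^ 6 := by
        field_simp
        ring
      linarith [h2]
    refine tendsto_atBot_mono' _ hEv ?_
    apply Tendsto.const_mul_atTop_of_neg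
    · have : (((4 * c ^ 2 : ℝ) ^ 6)⁻¹ : ℝ) ≤ 1 := inv_le_one_of_one_le₀ hC6
      linarith
    · exact (tendsto_pow_atTop (by norm_num : (6:ℕ) ≠ 0)).comp tendsto_inv_nhdsGT_zero
  · intro ρ hρ
    have hρC : ((ρ : ℝ) : ℂ) ≠ 0 := Complex.ofReal_ne_zero.mpr hρ.ne'
    have hcC : ((c : ℝ) : ℂ) ≠ 0 := Complex.ofReal_ne_zero.mpr hc.ne'
    constructor
    · rw [s13_pow6 ρ hρ.le, s23_pow6 ρ hρ.le, inv_neg]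
      push_cast
      field_simp
      norm_num
    · rw [s12_eq ρ hρ.le, ← hcdef]
      norm_cast
      field_simp
end
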